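/- Let v : [t_{n-1}, t_n] → ℝ be twice continuously differentiable, and let Π⁻v be the affine function with Π⁻v(t_n) = v(t_n) and ∫_{t_{n-1}}^{t_n}(v - Π⁻v) dt = 0. Then for all t ∈ [t_{n-1}, t_n], Π⁻v(t) - v(t) = ∫_t^{t_n} (t - s)·v''(s) ds + ((t_n - t)/k_n²)·∫_{t_{n-1}}^{t_n} (s - t_{n-1})²·v''(s) ds, where k_n = t_n - t_{n-1}. -/

import Mathlib

theorem stmt5 (a b : ℝ) (hab : a < b) (v v' v'' : ℝ → ℝ)
    (hderiv : ∀ s ∈ Set.Icc a b, HasDerivAt v (v' s) s)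
    (hderiv2 : ∀ s ∈ Set.Icc a b, HasDerivAt v' (v'' s) s)
    (hcont : ContinuousOn v'' (Set.Icc a b)) :
    ∀ t ∈ Set.Icc a b,
      (v b + ((v b - (b - a)⁻¹ * ∫ s in a..b, v s) / ((b - a) / 2)) * (t - b)) - v t
        = (∫ s in t..b, (t - s) * v'' s)
            + ((b - t) / (b - a) ^ 2) * ∫ s in a..b, (s - a) ^ 2 * v'' s := by
  intro t ht
  obtain ⟨hta, htb⟩ := ht
  have huab : Set.uIcc a b = Set.Icc a b := Set.uIcc_of_le hab.le
  have hutb : Set.uIcc t b = Set.Icc t b := Set.uIcc_of_le htb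
  have hsub : Set.Icc t b ⊆ Set.Icc a b := Set.Icc_subset_Icc hta le_rfl
  have hcv : ContinuousOn v (Set.Icc a b) :=
    fun s hs => ((hderiv s hs).continuousAt).continuousWithinAt
  have hcv' : ContinuousOn v' (Set.Icc a b) :=
    fun s hs => ((hderiv2 s hs).continuousAt).continuousWithinAt
  have hiv'' : IntervalIntegrable v'' MeasureTheory.volume a b := by
    apply ContinuousOn.intervalIntegrable; rwa [huab]
  have hiv' : IntervalIntegrable v' MeasureTheory.volume a b := by
    apply ContinuousOn.intervalIntegrable; rwa [huab]
  have hiv''t : IntervalIntegrable v'' MeasureTheory.volume t b := by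
    apply ContinuousOn.intervalIntegrable; rw [hutb]; exact hcont.mono hsub
  have hiv't : IntervalIntegrable v' MeasureTheory.volume t b := by
    apply ContinuousOn.intervalIntegrable; rw [hutb]; exact hcv'.mono hsub
  -- Step A : ∫ s in t..b, (t - s) * v'' s = (t - b) * v' b + (v b - v t)
  have ftcA : (∫ s in t..b, v' s) = v b - v t := by
    apply intervalIntegral.integral_eq_sub_of_hasDerivAt
    · intro x hx; exact hderiv x (hsub (hutb ▸ hx))
    · exact hiv't
  have hA : (∫ s in t..b, (t - s) * v'' s) = (t - b) * v' b + (v b - v t) := by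
    have := intervalIntegral.integral_mul_deriv_eq_deriv_mul
      (u := fun s => t - s) (u' := fun _ => (-1 : ℝ)) (v := v') (v' := v'')
      (a := t) (b := b)
      (fun x _ => by simpa using (hasDerivAt_id x).const_sub t)
      (fun x hx => hderiv2 x (hsub (hutb ▸ hx)))
      (intervalIntegrable_const) hiv''t
    rw [this]
    have : (∫ s in t..b, (-1 : ℝ) * v' s) = -(v b - v t) := by
      rw [show (fun s => (-1 : ℝ) * v' s) = fun s => -(v' s) by funext s; ring]
      rw [intervalIntegral.integral_neg, ftcA]
    rw [this]; ring
  -- Step B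
  have ftcB : (∫ s in a..b, v s) = ∫ s in a..b, v s := rfl
  have hB1 : (∫ s in a..b, (s - a) * v' s) = (b - a) * v b - ∫ s in a..b, v s := by
    have := intervalIntegral.integral_mul_deriv_eq_deriv_mul
      (u := fun s => s - a) (u' := fun _ => (1 : ℝ)) (v := v) (v' := v')
      (a := a) (b := b)
      (fun x _ => by simpa using (hasDerivAt_id x).sub_const a)
      (fun x hx => hderiv x (huab ▸ hx))
      (intervalIntegrable_const) hiv'
    rw [this]; simp
  have hB : (∫ s in a..b, (s - a) ^ 2 * v'' s)
      = (b - a) ^ 2 * v' b - 2 * ((b - a) * v b - ∫ s in a..b, v s) := by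
    have h2 : (∫ s in a..b, (2 * (s - a)) * v' s)
        = 2 * ((b - a) * v b - ∫ s in a..b, v s) := by
      rw [show (fun s => (2 * (s - a)) * v' s) = fun s => 2 * ((s - a) * v' s) by
        funext s; ring]
      rw [intervalIntegral.integral_const_mul, hB1]
    have := intervalIntegral.integral_mul_deriv_eq_deriv_mul
      (u := fun s => (s - a) ^ 2) (u' := fun s => 2 * (s - a)) (v := v') (v' := v'')
      (a := a) (b := b)
      (fun x _ => by
        have := ((hasDerivAt_id x).sub_const a).pow 2
        simpa [Pi.pow_def] using this)
      (fun x hx => hderiv2 x (huab ▸ hx))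
      (by apply Continuous.intervalIntegrable; continuity) hiv''
    rw [this, h2]; simp
  rw [hA, hB]
  have hk : b - a ≠ 0 := sub_ne_zero.mpr hab.ne'
  field_simp
  ring
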